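/- After decreasing the cost of edge {b,d}, any edge {u,v} of the old cut tree whose induced cut has cost 0, or which corresponds to a bridge of G, still induces a minimum u-v-cut in the decreased graph: any u-v-cut in G⁻ cheaper than cost(S) would have to separate b and d, but such a cut crossing {b,d} in addition to the bridge/zero cut is at least as expensive. -/

import Mathlib

open Finset

variable {V : Type*}

/-- Cost of the cut given by side `S`: sum of costs of ordered pairs crossing the cut. -/
def cutCost [Fintype V] [DecidableEq V] (c : V → V → NNReal) (S : Finset V) : NNReal :=
  ∑ x ∈ S, ∑ y ∈ Sᶜ, c x y

/-- Minimum `u`-`v`-cut value. -/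
noncomputable def minCut [Fintype V] [DecidableEq V] (c : V → V → NNReal) (u v : V) : NNReal :=
  sInf {w : NNReal | ∃ S : Finset V, u ∈ S ∧ v ∉ S ∧ cutCost c S = w}

theorem zero_or_bridge_cut_preserved [Fintype V] [DecidableEq V]
    (c cm : V → V → NNReal)
    (hsymm : ∀ x y, c x y = c y x) (b d : V) (hbd : b ≠ d)
    (Δ : NNReal) (hΔpos : 0 < Δ) (hΔ : Δ ≤ c b d)
    (h_agree : ∀ x y : V, ¬((x = b ∧ y = d) ∨ (x = d ∧ y = b)) → cm x y = c x y)
    (h_bd : cm b d = c b d - Δ) (h_db : cm d b = c b d - Δ)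
    (u v : V) (S : Finset V) (huS : u ∈ S) (hvS : v ∉ S)
    (hmin : cutCost c S = minCut c u v)
    (hcase : cutCost c S = 0 ∨
      ((∀ x ∈ S, ∀ y : V, y ∉ S → c x y ≠ 0 → x = u ∧ y = v) ∧ c u v = minCut c u v))
    (hsep : b ∈ S ↔ d ∈ S) :
    cutCost cm S = minCut cm u v := by
  have hSm : cutCost cm S = cutCost c S := by
    unfold cutCost
    refine Finset.sum_congr rfl fun x hx => Finset.sum_congr rfl fun y hy => ?_
    apply h_agree
    rintro (⟨rfl, rfl⟩ | ⟨rfl, rfl⟩)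
    · exact (Finset.mem_compl.mp hy) (hsep.mp hx)
    · exact (Finset.mem_compl.mp hy) (hsep.mpr hx)
  have hle : minCut cm u v ≤ cutCost cm S :=
    csInf_le (OrderBot.bddBelow _) ⟨S, huS, hvS, rfl⟩
  rcases hcase with h0 | ⟨_, hbridge⟩
  · have : cutCost cm S = 0 := hSm.trans h0
    rw [this]
    exact le_antisymm (zero_le) (this ▸ hle)
  · have huv : cm u v = c u v := by
      apply h_agree
      rintro (⟨rfl, rfl⟩ | ⟨rfl, rfl⟩)
      · exact hvS (hsep.mp huS)
      · exact hvS (hsep.mpr huS)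
    have hval : cutCost cm S = c u v := by
      rw [hSm, hmin, ← hbridge]
    refine le_antisymm ?_ hle
    rw [hval]
    refine le_csInf ⟨cutCost cm S, S, huS, hvS, rfl⟩ ?_
    rintro w ⟨T, huT, hvT, rfl⟩
    calc c u v = cm u v := huv.symm
      _ ≤ ∑ y ∈ Tᶜ, cm u y :=
          Finset.single_le_sum (fun _ _ => zero_le) (Finset.mem_compl.mpr hvT)
      _ ≤ cutCost cm T :=
          Finset.single_le_sum (f := fun x => ∑ y ∈ Tᶜ, cm x y)
            (fun _ _ => zero_le) huT
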